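/- If the rewrite rule R = (∇ ⊢ l → r) is closed, then a closed rewrite step implies a nominal rewrite step in an extended context: Δ ⊢ s →c_R t implies there exists a freshness context Γ whose atoms avoid atms(Δ,s,t) such that Δ ∪ Γ ⊢ s →_R t. -/

import Mathlib

/-! Nominal terms: atoms, permutations, terms, actions, freshness, α-equivalence,
nominal rewriting and nominal algebra, closed rewriting. -/

abbrev Atom := ℕ
abbrev Unknown := ℕ

/-- Finitely supported permutations of atoms. -/
def FinPerm := {π : Equiv.Perm Atom // {a | π a ≠ a}.Finite}

namespace FinPerm

instance : CoeFun FinPerm (fun _ => Atom → Atom) := ⟨fun π => π.1⟩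

def id : FinPerm := ⟨Equiv.refl Atom, by simp⟩

/-- `comp π π'` is `π ∘ π'` (first apply `π'`, then `π`). -/
def comp (π π' : FinPerm) : FinPerm :=
  ⟨π'.1.trans π.1, ((π.2.union π'.2).subset (by
    intro a ha
    simp only [Set.mem_setOf_eq, Equiv.trans_apply] at ha
    by_cases h : π'.1 a = a
    · exact Or.inl (by simpa [h] using ha)
    · exact Or.inr h))⟩

def inv (π : FinPerm) : FinPerm :=
  ⟨π.1.symm, π.2.subset (by
    intro a ha h
    exact ha (π.1.symm_apply_eq.mpr h.symm))⟩

def swap (a b : Atom) : FinPerm :=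
  ⟨Equiv.swap a b, (Set.toFinite {a, b}).subset (by
    intro c hc
    by_contra h
    simp only [Set.mem_insert_iff, Set.mem_singleton_iff, not_or] at h
    exact hc (Equiv.swap_apply_of_ne_of_ne h.1 h.2))⟩

/-- The (finite) set of atoms moved by `π`. -/
noncomputable def nontriv (π : FinPerm) : Finset Atom := π.2.toFinset

end FinPerm

/-- Nominal terms: atoms, moderated unknowns `π·X`, abstractions `[a]t`,
and term-formers applied to lists of arguments. -/
inductive Term : Type where
  | atom : Atom → Term
  | var  : FinPerm → Unknown → Term
  | abs  : Atom → Term → Term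
  | app  : ℕ → List Term → Term

/-- Permutation action on terms. -/
def permAct (π : FinPerm) : Term → Term
  | .atom a => .atom (π a)
  | .var π' X => .var (π.comp π') X
  | .abs a t => .abs (π a) (permAct π t)
  | .app f ts => .app f (ts.attach.map fun t => permAct π t.1)
decreasing_by
  all_goals simp_wf
  have := List.sizeOf_lt_of_mem t.2
  omega

/-- Substitutions, represented as total maps (the default value of `X` is `id·X`). -/
def Subst := Unknown → Term

/-- A substitution has finite domain. -/
def Subst.FinDom (σ : Subst) : Prop := {X | σ X ≠ .var FinPerm.id X}.Finite

/-- Substitution action on terms. -/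
def subst (σ : Subst) : Term → Term
  | .atom a => .atom a
  | .var π X => permAct π (σ X)
  | .abs a t => .abs a (subst σ t)
  | .app f ts => .app f (ts.attach.map fun t => subst σ t.1)
decreasing_by
  all_goals simp_wf
  have := List.sizeOf_lt_of_mem t.2
  omega

/-- Composition of substitutions: `(σ.comp θ) X = (Xσ)θ`. -/
def Subst.comp (σ θ : Subst) : Subst := fun X => subst θ (σ X)

/-- `σ∘π`, mapping `X` to `π·(σ X)`. -/
def Subst.permComp (σ : Subst) (π : FinPerm) : Subst := fun X => permAct π (σ X)

mutual
/-- Atoms occurring in a term. -/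
noncomputable def atmsF : Term → Finset Atom
  | .atom a => {a}
  | .var π _ => π.nontriv
  | .abs a t => insert a (atmsF t)
  | .app _ ts => atmsLF ts
noncomputable def atmsLF : List Term → Finset Atom
  | [] => ∅
  | t :: ts => atmsF t ∪ atmsLF ts
end

mutual
/-- Unknowns occurring in a term. -/
def unknF : Term → Finset Unknown
  | .atom _ => ∅
  | .var _ X => {X}
  | .abs _ t => unknF t
  | .app _ ts => unknLF ts
def unknLF : List Term → Finset Unknown
  | [] => ∅
  | t :: ts => unknF t ∪ unknLF ts
end

/-- Freshness contexts: finite sets of primitive constraints `a#X`. -/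
abbrev Ctx := Finset (Atom × Unknown)

def ctxAtoms (Δ : Ctx) : Finset Atom := Δ.image Prod.fst
def ctxUnkns (Δ : Ctx) : Finset Unknown := Δ.image Prod.snd

/-- Derivable freshness judgements `Δ ⊢ a # t`. -/
inductive Fresh (Δ : Ctx) : Atom → Term → Prop where
  | atom {a b} : a ≠ b → Fresh Δ a (.atom b)
  | var {a π X} : (π.inv a, X) ∈ Δ → Fresh Δ a (.var π X)
  | absSame {a t} : Fresh Δ a (.abs a t)
  | absDiff {a b t} : a ≠ b → Fresh Δ a t → Fresh Δ a (.abs b t)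
  | app {a f ts} : (∀ t ∈ ts, Fresh Δ a t) → Fresh Δ a (.app f ts)

/-- Derivable α-equivalence judgements `Δ ⊢ s ≈α t`. -/
inductive Aeq (Δ : Ctx) : Term → Term → Prop where
  | atom {a} : Aeq Δ (.atom a) (.atom a)
  | var {π π' : FinPerm} {X : Unknown} : (∀ a : Atom, (π : Atom → Atom) a ≠ (π' : Atom → Atom) a → (a, X) ∈ Δ) →
      Aeq Δ (.var π X) (.var π' X)
  | absSame {a t u} : Aeq Δ t u → Aeq Δ (.abs a t) (.abs a u)
  | absDiff {a b t u} : a ≠ b → Fresh Δ b t → Aeq Δ (permAct (FinPerm.swap b a) t) u →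
      Aeq Δ (.abs a t) (.abs b u)
  | app {f ts us} : ts.length = us.length → (∀ p ∈ ts.zip us, Aeq Δ p.1 p.2) →
      Aeq Δ (.app f ts) (.app f us)

/-- Subterm relation. -/
inductive Subterm : Term → Term → Prop where
  | refl (t) : Subterm t t
  | abs {s t a} : Subterm s t → Subterm s (.abs a t)
  | app {s t f ts} : t ∈ ts → Subterm s t → Subterm s (.app f ts)

mutual
/-- Number of occurrences of the unknown `X` in a term. -/
def countUnk (X : Unknown) : Term → ℕ
  | .atom _ => 0
  | .var _ Y => if Y = X then 1 else 0
  | .abs _ t => countUnk X t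
  | .app _ ts => countUnkL X ts
def countUnkL (X : Unknown) : List Term → ℕ
  | [] => 0
  | t :: ts => countUnk X t + countUnkL X ts
end

/-- A position: a term with a distinguished unknown occurring exactly once, as `id·X`. -/
structure Position where
  ctx : Term
  hole : Unknown
  once : countUnk hole ctx = 1
  idOnly : ∀ π : FinPerm, Subterm (.var π hole) ctx → π = FinPerm.id

def fillAux (X : Unknown) (u : Term) : Term → Term
  | .atom a => .atom a
  | .var π Y => if Y = X then u else .var π Y
  | .abs a t => .abs a (fillAux X u t)
  | .app f ts => .app f (ts.attach.map fun t => fillAux X u t.1)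
decreasing_by
  all_goals simp_wf
  have := List.sizeOf_lt_of_mem t.2
  omega

/-- `C[u]`: place `u` in the hole of the position `C`. -/
def Position.fill (C : Position) (u : Term) : Term := fillAux C.hole u C.ctx

/-- A rule `∇ ⊢ l → r` (also used for axioms `∇ ⊢ l = r`). -/
structure Rule where
  ctx : Ctx
  lhs : Term
  rhs : Term

noncomputable def Rule.atms (R : Rule) : Finset Atom := ctxAtoms R.ctx ∪ atmsF R.lhs ∪ atmsF R.rhs
def Rule.unkn (R : Rule) : Finset Unknown := ctxUnkns R.ctx ∪ unknF R.lhs ∪ unknF R.rhs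

/-- `Δ ⊢ ∇θ`: every constraint of `∇`, instantiated by `θ`, is derivable from `Δ`. -/
def FreshSubst (Δ N : Ctx) (θ : Subst) : Prop :=
  ∀ p ∈ N, Fresh Δ p.1 (subst θ (.var FinPerm.id p.2))

/-- One-step nominal rewriting with the rule `R` in context `Δ`. -/
def OneStepR (R : Rule) (Δ : Ctx) (s t : Term) : Prop :=
  ∃ (C : Position) (s' : Term) (π : FinPerm) (θ : Subst),
    s = C.fill s' ∧ FreshSubst Δ R.ctx θ ∧
    Aeq Δ s' (permAct π (subst θ R.lhs)) ∧
    Aeq Δ (C.fill (permAct π (subst θ R.rhs))) t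

def OneStep (Rw : Set Rule) (Δ : Ctx) (s t : Term) : Prop := ∃ R ∈ Rw, OneStepR R Δ s t

/-- `Δ ⊢_R s ↔* t`: the reflexive-symmetric-transitive closure, including
α-equivalence, of one-step rewriting. -/
inductive RewEq (Rw : Set Rule) (Δ : Ctx) : Term → Term → Prop where
  | step {s t} : OneStep Rw Δ s t → RewEq Rw Δ s t
  | alpha {s t} : Aeq Δ s t → RewEq Rw Δ s t
  | symm {s t} : RewEq Rw Δ s t → RewEq Rw Δ t s
  | trans {s t u} : RewEq Rw Δ s t → RewEq Rw Δ t u → RewEq Rw Δ s u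

/-- Atoms of a judgement `(Δ, s, t)`. -/
noncomputable def judgeAtms (Δ : Ctx) (s t : Term) : Finset Atom := ctxAtoms Δ ∪ atmsF s ∪ atmsF t

def judgeUnkn (Δ : Ctx) (s t : Term) : Finset Unknown := ctxUnkns Δ ∪ unknF s ∪ unknF t

/-- `Γ` is a fresh context for a set of atoms `A`: its atoms avoid `A`. -/
def FreshFor (Γ : Ctx) (A : Finset Atom) : Prop := ∀ p ∈ Γ, p.1 ∉ A

/-- Nominal algebra equality `Δ ⊢_T s = t`. -/
inductive AlgEq (T : Set Rule) (Δ : Ctx) : Term → Term → Prop where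
  | axm {s t} (R : Rule) (hR : R ∈ T) (Γ : Ctx) (C : Position) (π : FinPerm) (θ : Subst) :
      FreshFor Γ (judgeAtms Δ s t) →
      FreshSubst (Δ ∪ Γ) R.ctx θ →
      Aeq (Δ ∪ Γ) s (C.fill (permAct π (subst θ R.lhs))) →
      Aeq (Δ ∪ Γ) (C.fill (permAct π (subst θ R.rhs))) t →
      AlgEq T Δ s t
  | refl (s) : AlgEq T Δ s s
  | symm {s t} : AlgEq T Δ s t → AlgEq T Δ t s
  | trans {s t u} : AlgEq T Δ s t → AlgEq T Δ t u → AlgEq T Δ s u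

/-- `Rw` is a presentation of the equational theory `T`. -/
def Presents (Rw : Set Rule) (T : Set Rule) : Prop :=
  ∀ R : Rule, R ∈ T ↔ (R ∈ Rw ∨ Rule.mk R.ctx R.rhs R.lhs ∈ Rw)

/-- Structural renaming of atoms (by a permutation `τ`) and unknowns (by `ρ`). -/
def renameT (τ : FinPerm) (ρ : Unknown → Unknown) : Term → Term
  | .atom a => .atom (τ a)
  | .var π X => .var (τ.comp (π.comp τ.inv)) (ρ X)
  | .abs a t => .abs (τ a) (renameT τ ρ t)
  | .app f ts => .app f (ts.attach.map fun t => renameT τ ρ t.1)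
decreasing_by
  all_goals simp_wf
  have := List.sizeOf_lt_of_mem t.2
  omega

def renameCtx (τ : FinPerm) (ρ : Unknown → Unknown) (Δ : Ctx) : Ctx :=
  Δ.image (fun p => (τ p.1, ρ p.2))

def Rule.rename (τ : FinPerm) (ρ : Unknown → Unknown) (R : Rule) : Rule :=
  ⟨renameCtx τ ρ R.ctx, renameT τ ρ R.lhs, renameT τ ρ R.rhs⟩

/-- `R'` is a freshened variant of `R`, avoiding also the atoms `A` and unknowns `U`. -/
def FreshenedVariant (A : Finset Atom) (U : Finset Unknown) (R R' : Rule) : Prop :=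
  ∃ (τ : FinPerm) (ρ : Equiv.Perm Unknown),
    R' = R.rename τ ρ ∧
    (∀ a ∈ R.atms, τ a ∉ A ∪ R.atms) ∧
    (∀ X ∈ R.unkn, (ρ X) ∉ U ∪ R.unkn)

/-- A rule (or axiom) `∇ ⊢ l → r` is closed: a freshened variant of `∇ ⊢ (l,r)` matches
`∇ ⊢ (l,r)` in the context `∇` extended with `atms(R') # unkn(R)`. -/
def Rule.Closed (R : Rule) : Prop :=
  ∃ R' : Rule, FreshenedVariant ∅ ∅ R R' ∧
    ∃ σ : Subst, (∀ X, X ∉ R'.unkn → σ X = .var FinPerm.id X) ∧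
      FreshSubst (R.ctx ∪ R'.atms ×ˢ R.unkn) R'.ctx σ ∧
      Aeq (R.ctx ∪ R'.atms ×ˢ R.unkn) (subst σ R'.lhs) R.lhs ∧
      Aeq (R.ctx ∪ R'.atms ×ˢ R.unkn) (subst σ R'.rhs) R.rhs

/-- One-step closed rewriting `Δ ⊢ s →c_R t`. -/
def ClosedStepR (R : Rule) (Δ : Ctx) (s t : Term) : Prop :=
  ∃ R' : Rule, FreshenedVariant (judgeAtms Δ s t ∪ R.atms) (judgeUnkn Δ s t ∪ R.unkn) R R' ∧
    ∃ (C : Position) (s' : Term) (θ : Subst),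
      s = C.fill s' ∧
      FreshSubst (Δ ∪ R'.atms ×ˢ judgeUnkn Δ s t) R'.ctx θ ∧
      Aeq (Δ ∪ R'.atms ×ˢ judgeUnkn Δ s t) s' (subst θ R'.lhs) ∧
      Aeq (Δ ∪ R'.atms ×ˢ judgeUnkn Δ s t) (C.fill (subst θ R'.rhs)) t

def ClosedStep (Rw : Set Rule) (Δ : Ctx) (s t : Term) : Prop := ∃ R ∈ Rw, ClosedStepR R Δ s t

/-- `Δ ⊢_R s ↔c* t`: reflexive-symmetric-transitive closure, including α-equivalence,
of one-step closed rewriting. -/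
inductive ClosedRewEq (Rw : Set Rule) (Δ : Ctx) : Term → Term → Prop where
  | step {s t} : ClosedStep Rw Δ s t → ClosedRewEq Rw Δ s t
  | alpha {s t} : Aeq Δ s t → ClosedRewEq Rw Δ s t
  | symm {s t} : ClosedRewEq Rw Δ s t → ClosedRewEq Rw Δ t s
  | trans {s t u} : ClosedRewEq Rw Δ s t → ClosedRewEq Rw Δ t u → ClosedRewEq Rw Δ s u


section Aux

theorem Term.strongRecOn {P : Term → Prop}
    (hatom : ∀ a, P (.atom a)) (hvar : ∀ π X, P (.var π X))
    (habs : ∀ a t, P t → P (.abs a t))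
    (happ : ∀ f ts, (∀ t ∈ ts, P t) → P (.app f ts)) : ∀ t, P t
  | .atom a => hatom a
  | .var π X => hvar π X
  | .abs a t => habs a t (Term.strongRecOn hatom hvar habs happ t)
  | .app f ts => happ f ts (fun t ht => Term.strongRecOn hatom hvar habs happ t)
decreasing_by
  all_goals simp_wf
  all_goals first
    | omega
    | (have := List.sizeOf_lt_of_mem ht; omega)

@[simp] theorem FinPerm.comp_apply (π π' : FinPerm) (a : Atom) : (π.comp π') a = π (π' a) := rfl
@[simp] theorem FinPerm.inv_apply_apply (π : FinPerm) (a : Atom) : π.inv (π a) = a :=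
  π.1.symm_apply_apply a
@[simp] theorem FinPerm.apply_inv_apply (π : FinPerm) (a : Atom) : π (π.inv a) = a :=
  π.1.apply_symm_apply a
@[simp] theorem FinPerm.id_apply (a : Atom) : FinPerm.id a = a := rfl
theorem FinPerm.ext' {π π' : FinPerm} (h : ∀ a, π a = π' a) : π = π' :=
  Subtype.ext (Equiv.ext h)
theorem FinPerm.id_comp (π : FinPerm) : FinPerm.id.comp π = π := FinPerm.ext' fun _ => rfl
theorem FinPerm.comp_assoc (π₁ π₂ π₃ : FinPerm) :
    (π₁.comp π₂).comp π₃ = π₁.comp (π₂.comp π₃) := FinPerm.ext' fun _ => rfl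
theorem FinPerm.injective (π : FinPerm) : Function.Injective (π : Atom → Atom) := π.1.injective
@[simp] theorem FinPerm.mem_nontriv {π : FinPerm} {a} : a ∈ π.nontriv ↔ π a ≠ a :=
  Set.Finite.mem_toFinset _

theorem permAct_atom (π : FinPerm) (a : Atom) : permAct π (.atom a) = .atom (π a) := by
  rw [permAct]

theorem permAct_var (π π' : FinPerm) (X : Unknown) :
    permAct π (.var π' X) = .var (π.comp π') X := by
  rw [permAct]

theorem permAct_abs (π : FinPerm) (a : Atom) (t : Term) :
    permAct π (.abs a t) = .abs (π a) (permAct π t) := by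
  rw [permAct]

theorem permAct_app (π : FinPerm) (f : ℕ) (ts : List Term) :
    permAct π (.app f ts) = .app f (ts.map (permAct π)) := by
  rw [permAct]; simp

theorem subst_app (σ : Subst) (f : ℕ) (ts : List Term) :
    subst σ (.app f ts) = .app f (ts.map (subst σ)) := by
  rw [subst]; simp

theorem renameT_app (τ : FinPerm) (ρ : Unknown → Unknown) (f : ℕ) (ts : List Term) :
    renameT τ ρ (.app f ts) = .app f (ts.map (renameT τ ρ)) := by
  rw [renameT]; simp

theorem permAct_comp (π π' : FinPerm) : ∀ t, permAct (π.comp π') t = permAct π (permAct π' t) := by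
  intro t
  induction t using Term.strongRecOn with
  | hatom a => simp [permAct]
  | hvar π'' X => simp [permAct, FinPerm.comp_assoc]
  | habs a t ih => simp [permAct, ih]
  | happ f ts ih =>
    simp only [permAct_app, List.map_map]
    exact congrArg _ (List.map_congr_left fun t ht => ih t ht)

theorem subst_permAct (σ : Subst) (π : FinPerm) :
    ∀ t, subst σ (permAct π t) = permAct π (subst σ t) := by
  intro t
  induction t using Term.strongRecOn with
  | hatom a => simp [permAct, subst]
  | hvar π' X => simp [permAct, subst, permAct_comp]
  | habs a t ih => simp [permAct, subst, ih]
  | happ f ts ih =>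
    simp only [permAct_app, subst_app, List.map_map]
    exact congrArg _ (List.map_congr_left fun t ht => ih t ht)

theorem subst_subst (σ θ : Subst) : ∀ t, subst θ (subst σ t) = subst (σ.comp θ) t := by
  intro t
  induction t using Term.strongRecOn with
  | hatom a => simp [subst]
  | hvar π X => simp [subst, subst_permAct, Subst.comp]
  | habs a t ih => simp [subst, ih]
  | happ f ts ih =>
    simp only [subst_app, List.map_map]
    exact congrArg _ (List.map_congr_left fun t ht => ih t ht)

theorem permAct_id : ∀ t, permAct FinPerm.id t = t := by
  intro t
  induction t using Term.strongRecOn with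
  | hatom a => simp [permAct]
  | hvar π X => simp [permAct, FinPerm.id_comp]
  | habs a t ih => simp [permAct, ih]
  | happ f ts ih =>
    rw [permAct_app]
    exact congrArg _ ((List.map_congr_left (g := _root_.id) fun t ht => ih t ht).trans
      (List.map_id ts))

theorem subst_var_id (θ : Subst) (X : Unknown) : subst θ (.var FinPerm.id X) = θ X := by
  simp [subst, permAct_id]

theorem renameT_eq (τ : FinPerm) (ρ : Unknown → Unknown) :
    ∀ t, renameT τ ρ t = permAct τ (subst (fun X => .var τ.inv (ρ X)) t) := by
  intro t
  induction t using Term.strongRecOn with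
  | hatom a => simp [renameT, permAct, subst.eq_1 (fun X => Term.var τ.inv (ρ X))]
  | hvar π X => simp [renameT, permAct, subst.eq_2 (fun X => Term.var τ.inv (ρ X))]
  | habs a t ih => simp [renameT, permAct, subst.eq_3 (fun X => Term.var τ.inv (ρ X)), ih]
  | happ f ts ih =>
    simp only [renameT_app, subst_app (fun X => .var τ.inv (ρ X)), permAct_app, List.map_map]
    exact congrArg _ (List.map_congr_left fun t ht => ih t ht)

theorem subst_renameT (τ : FinPerm) (ρ : Unknown → Unknown) (θ : Subst) (t : Term) :
    subst θ (renameT τ ρ t)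
      = permAct τ (subst (Subst.comp (fun X => .var τ.inv (ρ X)) θ) t) := by
  rw [renameT_eq, subst_permAct, subst_subst (fun X => .var τ.inv (ρ X))]

theorem Fresh.perm {Δ : Ctx} {a : Atom} {t : Term} (π : FinPerm) (h : Fresh Δ a t) :
    Fresh Δ (π a) (permAct π t) := by
  induction h with
  | @atom b hne =>
    rw [permAct_atom]
    exact .atom fun h => hne (π.injective h)
  | @var π' X hmem =>
    rw [permAct_var]
    apply Fresh.var
    have hkey : ∀ b, ((π.comp π').inv) (π b) = π'.inv b := by
      intro b
      simp [FinPerm.comp, FinPerm.inv]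
    rw [hkey]
    exact hmem
  | @absSame t =>
    rw [permAct_abs]
    exact .absSame
  | @absDiff b t hne _ ih =>
    rw [permAct_abs]
    exact .absDiff (fun h => hne (π.injective h)) ih
  | @app f ts _ ih =>
    rw [permAct_app]
    refine .app fun u hu => ?_
    obtain ⟨v, hv, rfl⟩ := List.mem_map.mp hu
    exact ih v hv

theorem nontriv_conj (τ π : FinPerm) :
    (τ.comp (π.comp τ.inv)).nontriv = π.nontriv.image τ := by
  ext b
  simp only [FinPerm.mem_nontriv, Finset.mem_image, FinPerm.comp_apply]
  constructor
  · intro h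
    refine ⟨τ.inv b, fun he => h ?_, by simp⟩
    rw [he]; simp
  · rintro ⟨a, ha, rfl⟩
    simp only [FinPerm.inv_apply_apply]
    exact fun h => ha (τ.injective h)

theorem atmsLF_map (τ : FinPerm) (ρ : Unknown → Unknown) (ts : List Term)
    (h : ∀ t ∈ ts, atmsF (renameT τ ρ t) = (atmsF t).image τ) :
    atmsLF (ts.map (renameT τ ρ)) = (atmsLF ts).image τ := by
  induction ts with
  | nil => simp [atmsLF]
  | cons t ts ih =>
    simp only [List.map_cons, atmsLF, Finset.image_union]
    rw [h t (by simp), ih fun u hu => h u (by simp [hu])]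

theorem atmsF_rename (τ : FinPerm) (ρ : Unknown → Unknown) :
    ∀ t, atmsF (renameT τ ρ t) = (atmsF t).image τ := by
  intro t
  induction t using Term.strongRecOn with
  | hatom a => simp [renameT, atmsF]
  | hvar π X =>
    rw [show renameT τ ρ (.var π X) = .var (τ.comp (π.comp τ.inv)) (ρ X) from by simp [renameT]]
    simp only [atmsF]
    exact nontriv_conj τ π
  | habs a t ih =>
    rw [show renameT τ ρ (.abs a t) = .abs (τ a) (renameT τ ρ t) from by simp [renameT]]
    simp only [atmsF, ih, Finset.image_insert]
  | happ f ts ih =>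
    rw [renameT_app]
    simp only [atmsF]
    exact atmsLF_map τ ρ ts ih

theorem ctxAtoms_rename (τ : FinPerm) (ρ : Unknown → Unknown) (Δ : Ctx) :
    ctxAtoms (renameCtx τ ρ Δ) = (ctxAtoms Δ).image τ := by
  ext a
  simp only [ctxAtoms, renameCtx, Finset.mem_image, Finset.image_image, Function.comp]

theorem Rule.atms_rename (τ : FinPerm) (ρ : Unknown → Unknown) (R : Rule) :
    (R.rename τ ρ).atms = R.atms.image τ := by
  simp [Rule.atms, Rule.rename, ctxAtoms_rename, atmsF_rename, Finset.image_union]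

end Aux

/-- If the rule `R` is closed then a closed rewrite step implies a nominal rewrite step
in a context extended by a fresh `Γ`. -/
theorem closed_rew_implies_rew (R : Rule) (hR : R.Closed) (Δ : Ctx) (s t : Term)
    (h : ClosedStepR R Δ s t) :
    ∃ Γ : Ctx, FreshFor Γ (judgeAtms Δ s t) ∧ OneStepR R (Δ ∪ Γ) s t := by
  obtain ⟨R', ⟨τ, ρ, hR', hAt, -⟩, C, s', θ, hs, hfs, h1, h2⟩ := h
  refine ⟨R'.atms ×ˢ judgeUnkn Δ s t, ?_, ?_⟩
  · intro p hp
    rw [Finset.mem_product] at hp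
    have h1p := hp.1
    rw [hR', Rule.atms_rename, Finset.mem_image] at h1p
    obtain ⟨a, ha, hpa⟩ := h1p
    have h2p := hAt a ha
    rw [← hpa]
    intro hmem
    exact h2p (Finset.mem_union_left _ (Finset.mem_union_left _ hmem))
  · refine ⟨C, s', τ, Subst.comp (fun X => .var τ.inv (ρ X)) θ, hs, ?_, ?_, ?_⟩
    · intro p hp
      have hp' : (τ p.1, ρ p.2) ∈ R'.ctx := by
        rw [hR']
        exact Finset.mem_image_of_mem _ hp
      have hf := hfs (τ p.1, ρ p.2) hp'
      simp only [subst_var_id] at hf ⊢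
      have hf' := Fresh.perm τ.inv hf
      simpa [Subst.comp, subst] using hf'
    · rw [show R'.lhs = renameT τ ρ R.lhs from by rw [hR']; rfl, subst_renameT] at h1
      exact h1
    · rw [show R'.rhs = renameT τ ρ R.rhs from by rw [hR']; rfl, subst_renameT] at h2
      exact h2
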